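/- Let d ≥ 1. Let (k_j)_{j∈ℕ} and k_∞ be multi-indices {1,…,d} → ℕ (with 0 encoding ∞) such that for each i ∈ {1,…,d}: if k_∞(i) ≥ 1 then k_j(i) = k_∞(i) for all sufficiently large j, and if k_∞(i) = 0 then for every B ∈ ℕ, for all sufficiently large j either k_j(i) = 0 or k_j(i) > B. Let (σ_j)_{j∈ℕ} and σ_∞ be skew bicharacters of ℤ^d such that σ_j(h,y) = 1 whenever h ∈ H_{k_j} (and similarly for σ_∞ and H_{k_∞}), and such that σ_j(x,y) → σ_∞(x,y) as j → ∞ for every (x,y) ∈ ℤ^d × ℤ^d. Then for every f ∈ ℓ¹(ℤ^d), the operators T_{k_j,σ_j,f} converge to T_{k_∞,σ_∞,f} in the strong operator topology: for every ξ ∈ ℓ²(ℤ^d), ‖(T_{k_j,σ_j,f} − T_{k_∞,σ_∞,f})ξ‖₂ → 0 as j → ∞. -/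

import Mathlib

noncomputable section

open Filter

/-- `ℤ^d`. -/
abbrev Zd (d : ℕ) := Fin d → ℤ

/-- `ℓ²(ℤ^d)` with complex coefficients. -/
abbrev Hilb (d : ℕ) := lp (fun _ : Zd d => ℂ) 2

/-- `ℓ¹(ℤ^d)` with complex coefficients. -/
abbrev L1 (d : ℕ) := lp (fun _ : Zd d => ℂ) 1

/-- The canonical Hilbert basis vector `e_n` of `ℓ²(ℤ^d)`. -/
def eVec (d : ℕ) (n : Zd d) : Hilb d := lp.single 2 n 1

/-- A skew bicharacter of `ℤ^d`. -/
def IsSkewBichar (d : ℕ) (σ : Zd d → Zd d → ℂ) : Prop :=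
  (∀ x y, ‖σ x y‖ = 1) ∧
  (∀ x x' y, σ (x + x') y = σ x y * σ x' y) ∧
  (∀ x y y', σ x (y + y') = σ x y * σ x y') ∧
  (∀ x y, σ y x = starRingEnd ℂ (σ x y)) ∧
  (∀ x, σ x x = 1)

/-- `H_k = k ℤ^d`, with the convention that `k i = 0` encodes `∞` (so `∞ℤ = {0}`). -/
def Hset (d : ℕ) (k : Fin d → ℕ) : Set (Zd d) :=
  {x | ∀ i, (k i : ℤ) ∣ x i}

/-- The centered fundamental domain `I_k` (no constraint on a coordinate when `k i = 0`). -/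
def Iset (d : ℕ) (k : Fin d → ℕ) : Set (Zd d) :=
  {x | ∀ i, k i = 0 ∨
    (Int.fdiv (1 - (k i : ℤ)) 2 ≤ x i ∧ x i ≤ Int.fdiv ((k i : ℤ) - 1) 2)}

/-- Convergence of the multi-indices `k_j` to `k_∞` in `(ℕ∗ ∪ {∞})^d`, where `0` encodes
`∞`: coordinates with finite limit are eventually constant, and coordinates with limit
`∞` are eventually `∞` or larger than any given bound. -/
def MultiIndexTendsto (d : ℕ) (k : ℕ → Fin d → ℕ) (kinf : Fin d → ℕ) : Prop :=
  (∀ i, 1 ≤ kinf i → ∀ᶠ j in atTop, k j i = kinf i) ∧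
  (∀ i, kinf i = 0 → ∀ B : ℕ, ∀ᶠ j in atTop, k j i = 0 ∨ B < k j i)

def CoordCond (k : ℕ) (a : ℤ) : Prop :=
  k = 0 ∨ (Int.fdiv (1 - (k:ℤ)) 2 ≤ a ∧ a ≤ Int.fdiv ((k:ℤ) - 1) 2)



lemma coord_uniq {k : ℕ} {a c : ℤ} (ha : CoordCond k a) (hc : CoordCond k c)
    (h : (k:ℤ) ∣ a - c) : a = c := by
  rcases eq_or_ne k 0 with rfl | h0
  · have := zero_dvd_iff.mp (by exact_mod_cast h)
    omega
  · have hk1 : (1:ℤ) ≤ (k:ℤ) := by exact_mod_cast Nat.one_le_iff_ne_zero.mpr h0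
    obtain ⟨ha1, ha2⟩ := ha.resolve_left h0
    obtain ⟨hc1, hc2⟩ := hc.resolve_left h0
    rw [Int.fdiv_eq_ediv_of_nonneg _ (by norm_num)] at ha1 ha2 hc1 hc2
    have : a - c = 0 := Int.eq_zero_of_abs_lt_dvd h (by rw [abs_lt]; omega)
    omega

lemma coord_in {k : ℕ} {a : ℤ} (hk : 2 * a.natAbs + 2 < k) : CoordCond k a := by
  right
  rw [Int.fdiv_eq_ediv_of_nonneg _ (by norm_num), Int.fdiv_eq_ediv_of_nonneg _ (by norm_num)]
  omega

lemma coord_inj {k : ℕ} {m z w a b c e : ℤ}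
    (ha : CoordCond k a) (hb : CoordCond k b) (hc : CoordCond k c) (he : CoordCond k e)
    (da : (k:ℤ) ∣ (z - m) - a) (db : (k:ℤ) ∣ z - b)
    (dc : (k:ℤ) ∣ (w - m) - c) (de : (k:ℤ) ∣ w - e)
    (heq : a + (z - b) = c + (w - e)) : z = w := by
  have hB : a = c := coord_uniq ha hc (by
    have h1 : (k:ℤ) ∣ ((z - m) - a) - ((w - m) - c) := dvd_sub da dc
    have h2 : (k:ℤ) ∣ (z - b) - (w - e) := dvd_sub db de
    have : (k:ℤ) ∣ (((z-m)-a) - ((w-m)-c)) - ((z-b)-(w-e)) := dvd_sub h1 h2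
    have h3 : (((z-m)-a) - ((w-m)-c)) - ((z-b)-(w-e)) = (b - e) - (a - c) := by ring
    rw [h3] at this
    -- also k ∣ (b-e) - 2(a-c)? we need k ∣ a - c.
    -- from heq : z - w = (c - a) + (b - e). h1: k ∣ (z-w) - (a-c).
    have h4 : (z - w) - (a - c) = (b - e) - 2*(a - c) := by linarith [heq]
    have h5 : (k:ℤ) ∣ (b - e) - 2*(a-c) := by
      have : ((z - m) - a) - ((w - m) - c) = (z - w) - (a - c) := by ring
      rw [this, h4] at h1; exact h1
    have h6 : (k:ℤ) ∣ ((b-e) - (a-c)) - ((b-e) - 2*(a-c)) := dvd_sub this h5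
    have h7 : ((b-e) - (a-c)) - ((b-e) - 2*(a-c)) = a - c := by ring
    rwa [h7] at h6)
  have hA : b = e := coord_uniq hb he (by
    have h1 : (k:ℤ) ∣ ((z - m) - a) - ((w - m) - c) := dvd_sub da dc
    have h3 : ((z - m) - a) - ((w - m) - c) = b - e := by omega
    rwa [h3] at h1)
  omega

section Helpers

variable {d : ℕ}

lemma eVec_orthonormal (d : ℕ) : Orthonormal ℂ (eVec d) := by
  classical
  rw [orthonormal_iff_ite]
  intro x y
  rw [eVec, lp.inner_single_left]
  simp only [RCLike.inner_apply, map_one, one_mul]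
  by_cases h : x = y
  · subst h; rw [if_pos rfl, eVec, lp.single_apply_self, mul_one]
  · rw [if_neg h, eVec, lp.single_apply_ne _ _ _ h, mul_one]

lemma hasSum_smul_eVec (ξ : Hilb d) :
    HasSum (fun x : Zd d => (ξ x : ℂ) • eVec d x) ξ := by
  classical
  have h := lp.hasSum_single (E := fun _ : Zd d => ℂ) ENNReal.ofNat_ne_top ξ
  have hfun : (fun x : Zd d => (ξ x : ℂ) • eVec d x)
      = fun x : Zd d => lp.single 2 x (ξ x) := by
    funext x
    rw [eVec, ← lp.single_smul, smul_eq_mul, mul_one]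
  rw [hfun]
  exact h

lemma contraction (S' : Hilb d →L[ℂ] Hilb d) (c : Zd d → ℂ) (π : Zd d → Zd d)
    (hπ : Function.Injective π) (hc : ∀ x, ‖c x‖ = 1)
    (hact : ∀ x, S' (eVec d x) = c x • eVec d (π x)) (ξ : Hilb d) :
    ‖S' ξ‖ ≤ ‖ξ‖ := by
  classical
  have hsum := hasSum_smul_eVec ξ
  have hon := eVec_orthonormal d
  have hon' : Orthonormal ℂ (fun x => eVec d (π x)) := hon.comp π hπ
  have key : ∀ F : Finset (Zd d),
      ‖S' (∑ x ∈ F, (ξ x : ℂ) • eVec d x)‖ = ‖∑ x ∈ F, (ξ x : ℂ) • eVec d x‖ := by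
    intro F
    have h1 : S' (∑ x ∈ F, (ξ x : ℂ) • eVec d x)
        = ∑ x ∈ F, (ξ x * c x) • eVec d (π x) := by
      rw [map_sum]
      refine Finset.sum_congr rfl fun x _ => ?_
      rw [map_smul, hact, smul_smul]
    have e1 := hon'.inner_sum (fun x => (ξ x : ℂ) * c x) (fun x => (ξ x : ℂ) * c x) F
    have e2 := hon.inner_sum (fun x => (ξ x : ℂ)) (fun x => (ξ x : ℂ)) F
    have hterm : ∀ x, (starRingEnd ℂ) ((ξ x : ℂ) * c x) * ((ξ x : ℂ) * c x)
        = (starRingEnd ℂ) (ξ x : ℂ) * (ξ x : ℂ) := by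
      intro x
      have h2 : (c x) * (starRingEnd ℂ) (c x) = 1 := by
        rw [Complex.mul_conj]
        norm_cast
        rw [← Complex.sq_norm, hc x, one_pow]
      calc (starRingEnd ℂ) ((ξ x : ℂ) * c x) * ((ξ x : ℂ) * c x)
          = ((starRingEnd ℂ) (ξ x : ℂ) * (ξ x : ℂ)) * ((c x) * (starRingEnd ℂ) (c x)) := by
            rw [map_mul]; ring
        _ = (starRingEnd ℂ) (ξ x : ℂ) * (ξ x : ℂ) := by rw [h2, mul_one]
    have hinner : (inner ℂ (S' (∑ x ∈ F, (ξ x : ℂ) • eVec d x))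
        (S' (∑ x ∈ F, (ξ x : ℂ) • eVec d x)) : ℂ)
        = inner ℂ (∑ x ∈ F, (ξ x : ℂ) • eVec d x) (∑ x ∈ F, (ξ x : ℂ) • eVec d x) := by
      rw [h1, e1, e2]
      exact Finset.sum_congr rfl fun x _ => hterm x
    rw [@inner_self_eq_norm_sq_to_K ℂ, @inner_self_eq_norm_sq_to_K ℂ] at hinner
    have hsq : ‖S' (∑ x ∈ F, (ξ x : ℂ) • eVec d x)‖ ^ 2
        = ‖∑ x ∈ F, (ξ x : ℂ) • eVec d x‖ ^ 2 := by exact_mod_cast hinner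
    have hn1 : (0:ℝ) ≤ ‖S' (∑ x ∈ F, (ξ x : ℂ) • eVec d x)‖ := norm_nonneg _
    have hn2 : (0:ℝ) ≤ ‖∑ x ∈ F, (ξ x : ℂ) • eVec d x‖ := norm_nonneg _
    nlinarith
  have t1 : Tendsto (fun F : Finset (Zd d) => ‖S' (∑ x ∈ F, (ξ x : ℂ) • eVec d x)‖)
      atTop (nhds ‖S' ξ‖) :=
    (continuous_norm.tendsto _).comp ((S'.continuous.tendsto ξ).comp hsum)
  have t2 : Tendsto (fun F : Finset (Zd d) => ‖∑ x ∈ F, (ξ x : ℂ) • eVec d x‖)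
      atTop (nhds ‖ξ‖) := (continuous_norm.tendsto _).comp hsum
  exact le_of_tendsto_of_tendsto' t1 t2 fun F => (key F).le

lemma strong_conv (A : ℕ → Hilb d →L[ℂ] Hilb d) (C : ℝ) (hC : 0 ≤ C)
    (hbd : ∀ j ξ, ‖A j ξ‖ ≤ C * ‖ξ‖)
    (hbas : ∀ x, Tendsto (fun j => ‖A j (eVec d x)‖) atTop (nhds 0)) (ξ : Hilb d) :
    Tendsto (fun j => ‖A j ξ‖) atTop (nhds 0) := by
  classical
  rw [Metric.tendsto_atTop]
  intro ε hε
  set δ := ε / (2 * (C + 1)) with hδdef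
  have hδ : 0 < δ := by positivity
  have hsum := hasSum_smul_eVec ξ
  obtain ⟨F, hF⟩ := (Metric.tendsto_nhds.mp hsum δ hδ).exists
  set ξ' := ∑ x ∈ F, (ξ x : ℂ) • eVec d x with hξ'def
  have hdist : ‖ξ - ξ'‖ < δ := by
    rw [dist_eq_norm] at hF
    rwa [norm_sub_rev]
  have hfin : Tendsto (fun j => ∑ x ∈ F, ‖(ξ x : ℂ)‖ * ‖A j (eVec d x)‖)
      atTop (nhds 0) := by
    have h0 : (0:ℝ) = ∑ x ∈ F, (0:ℝ) := by simp
    rw [h0]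
    exact tendsto_finset_sum F fun x _ => by simpa using (hbas x).const_mul ‖(ξ x : ℂ)‖
  obtain ⟨N, hN⟩ := eventually_atTop.mp (hfin.eventually_lt_const (half_pos hε))
  refine ⟨N, fun j hj => ?_⟩
  have h1 : ‖A j ξ‖ ≤ ‖A j (ξ - ξ')‖ + ‖A j ξ'‖ := by
    have hξeq : ξ = (ξ - ξ') + ξ' := by abel
    calc ‖A j ξ‖ = ‖A j (ξ - ξ') + A j ξ'‖ := by rw [← map_add, ← hξeq]
      _ ≤ _ := norm_add_le _ _
  have h2 : ‖A j (ξ - ξ')‖ ≤ C * δ :=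
    (hbd j _).trans (mul_le_mul_of_nonneg_left hdist.le hC)
  have h3 : ‖A j ξ'‖ ≤ ∑ x ∈ F, ‖(ξ x : ℂ)‖ * ‖A j (eVec d x)‖ := by
    rw [hξ'def, map_sum]
    refine (norm_sum_le _ _).trans ?_
    refine Finset.sum_le_sum fun x _ => ?_
    rw [map_smul, norm_smul]
  have h4 : C * δ ≤ ε / 2 := by
    have hC1 : (0:ℝ) < C + 1 := by linarith
    calc C * δ ≤ (C + 1) * δ := by gcongr; linarith
      _ = ε / 2 := by rw [hδdef]; field_simp
  have h5 : ∑ x ∈ F, ‖(ξ x : ℂ)‖ * ‖A j (eVec d x)‖ < ε / 2 := hN j hj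
  have : ‖A j ξ‖ < ε := by linarith
  rw [Real.dist_eq, sub_zero, abs_of_nonneg (norm_nonneg _)]
  exact this


end Helpers



set_option maxHeartbeats 1000000 in
/-- If `(k_j, σ_j) → (k_∞, σ_∞)` in `Ξ^d`, then for every `f ∈ ℓ¹(ℤ^d)` the operators
`T_{k_j,σ_j,f} = ∑_m f(m) S_{k_j,σ_j,m}` converge to `T_{k_∞,σ_∞,f}` in the strong
operator topology on `ℓ²(ℤ^d)`. -/
theorem stmt11 (d : ℕ) (hd : 1 ≤ d)
    (k : ℕ → Fin d → ℕ) (kinf : Fin d → ℕ)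
    (hk : MultiIndexTendsto d k kinf)
    (σ : ℕ → Zd d → Zd d → ℂ) (σinf : Zd d → Zd d → ℂ)
    (hσ : ∀ j, IsSkewBichar d (σ j)) (hσinf : IsSkewBichar d σinf)
    (hσH : ∀ j, ∀ h ∈ Hset d (k j), ∀ y : Zd d, σ j h y = 1)
    (hσinfH : ∀ h ∈ Hset d kinf, ∀ y : Zd d, σinf h y = 1)
    (hσconv : ∀ x y : Zd d, Tendsto (fun j => σ j x y) atTop (nhds (σinf x y)))
    (r : ℕ → Zd d → Zd d) (rinf : Zd d → Zd d)
    (hr : ∀ j, ∀ n : Zd d, r j n ∈ Iset d (k j) ∧ n - r j n ∈ Hset d (k j))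
    (hrinf : ∀ n : Zd d, rinf n ∈ Iset d kinf ∧ n - rinf n ∈ Hset d kinf)
    (S : ℕ → Zd d → (Hilb d →L[ℂ] Hilb d)) (Sinf : Zd d → (Hilb d →L[ℂ] Hilb d))
    (hS : ∀ j, ∀ m x : Zd d,
      S j m (eVec d x) = σ j x m • eVec d (r j (x - m) + (x - r j x)))
    (hSinf : ∀ m x : Zd d,
      Sinf m (eVec d x) = σinf x m • eVec d (rinf (x - m) + (x - rinf x)))
    (f : L1 d)
    (T : ℕ → (Hilb d →L[ℂ] Hilb d)) (Tinf : Hilb d →L[ℂ] Hilb d)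
    (hT : ∀ j, HasSum (fun m : Zd d => f m • S j m) (T j))
    (hTinf : HasSum (fun m : Zd d => f m • Sinf m) Tinf) :
    ∀ ξ : Hilb d, Tendsto (fun j => ‖(T j - Tinf) ξ‖) atTop (nhds 0) := by
  classical
  -- summability of the norms of f
  have hfsum : Summable (fun m : Zd d => ‖f m‖) := by
    have h1 := (lp.memℓp f).summable (p := 1) (by norm_num)
    simpa using h1
  -- coordinate conditions
  have hcond : ∀ j n i, CoordCond (k j i) (r j n i) := fun j n i => (hr j n).1 i
  have hcondinf : ∀ n i, CoordCond (kinf i) (rinf n i) := fun n i => (hrinf n).1 i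
  have hdvd : ∀ j n i, ((k j i : ℤ)) ∣ n i - r j n i := fun j n i => (hr j n).2 i
  have hdvdinf : ∀ n i, ((kinf i : ℤ)) ∣ n i - rinf n i := fun n i => (hrinf n).2 i
  -- eventual equality of the representatives
  have hrconv : ∀ n : Zd d, ∀ᶠ j in atTop, r j n = rinf n := by
    intro n
    have hco : ∀ i, ∀ᶠ j in atTop, r j n i = rinf n i := by
      intro i
      rcases Nat.eq_zero_or_pos (kinf i) with h0 | hpos
      · have hrn : rinf n i = n i := by
          have h := hdvdinf n i
          rw [h0] at h
          have := zero_dvd_iff.mp (by exact_mod_cast h)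
          omega
        filter_upwards [hk.2 i h0 (2 * (n i).natAbs + 2)] with j hj
        rcases hj with hj0 | hjB
        · have h := hdvd j n i
          rw [hj0] at h
          have := zero_dvd_iff.mp (by exact_mod_cast h)
          omega
        · have h := coord_uniq (hcond j n i) (coord_in hjB)
            (dvd_sub_comm.mp (hdvd j n i))
          omega
      · filter_upwards [hk.1 i hpos] with j hj
        refine coord_uniq (hj ▸ hcond j n i) (hcondinf n i) ?_
        have h1 := hdvdinf n i
        have h2 := hdvd j n i
        rw [hj] at h2
        have := dvd_sub h1 h2
        have heq : (n i - rinf n i) - (n i - r j n i) = r j n i - rinf n i := by ring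
        rwa [heq] at this
    have hall := (eventually_all (ι := Fin d)).2 hco
    exact hall.mono fun j h => funext h
  -- injectivity of the index maps
  have hinj : ∀ j m, Function.Injective (fun x : Zd d => r j (x - m) + (x - r j x)) := by
    intro j m x y hxy
    funext i
    have heq := congrFun hxy i
    exact coord_inj (hcond j (x - m) i) (hcond j x i) (hcond j (y - m) i) (hcond j y i)
      (hdvd j (x - m) i) (hdvd j x i) (hdvd j (y - m) i) (hdvd j y i) heq
  have hinjinf : ∀ m, Function.Injective (fun x : Zd d => rinf (x - m) + (x - rinf x)) := by
    intro m x y hxy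
    funext i
    have heq := congrFun hxy i
    exact coord_inj (hcondinf (x - m) i) (hcondinf x i) (hcondinf (y - m) i) (hcondinf y i)
      (hdvdinf (x - m) i) (hdvdinf x i) (hdvdinf (y - m) i) (hdvdinf y i) heq
  -- contraction bounds
  have hSle : ∀ j m (ξ : Hilb d), ‖S j m ξ‖ ≤ ‖ξ‖ := fun j m ξ =>
    contraction (S j m) (fun x => σ j x m) _ (hinj j m) (fun x => (hσ j).1 x m)
      (fun x => hS j m x) ξ
  have hSinfle : ∀ m (ξ : Hilb d), ‖Sinf m ξ‖ ≤ ‖ξ‖ := fun m ξ =>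
    contraction (Sinf m) (fun x => σinf x m) _ (hinjinf m) (fun x => hσinf.1 x m)
      (fun x => hSinf m x) ξ
  -- basis convergence
  have hSbasis : ∀ m x : Zd d,
      Tendsto (fun j => ‖(S j m - Sinf m) (eVec d x)‖) atTop (nhds 0) := by
    intro m x
    have hev : ∀ᶠ j in atTop,
        ‖(S j m - Sinf m) (eVec d x)‖ = ‖σ j x m - σinf x m‖ := by
      filter_upwards [hrconv (x - m), hrconv x] with j h1 h2
      rw [ContinuousLinearMap.sub_apply, hS, hSinf, h1, h2, ← sub_smul, norm_smul,
        (eVec_orthonormal d).1 _, mul_one]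
    have hten : Tendsto (fun j => ‖σ j x m - σinf x m‖) atTop (nhds 0) := by
      have := tendsto_sub_nhds_zero_iff.mpr (hσconv x m)
      exact tendsto_zero_iff_norm_tendsto_zero.mp this
    exact hten.congr' (hev.mono fun j h => h.symm)
  -- strong convergence of the S operators
  have hSstrong : ∀ m (ξ : Hilb d),
      Tendsto (fun j => ‖(S j m - Sinf m) ξ‖) atTop (nhds 0) := by
    intro m
    refine strong_conv (fun j => S j m - Sinf m) 2 (by norm_num) ?_ (hSbasis m)
    intro j ξ
    rw [ContinuousLinearMap.sub_apply]
    calc ‖S j m ξ - Sinf m ξ‖ ≤ ‖S j m ξ‖ + ‖Sinf m ξ‖ := norm_sub_le _ _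
      _ ≤ ‖ξ‖ + ‖ξ‖ := add_le_add (hSle j m ξ) (hSinfle m ξ)
      _ = 2 * ‖ξ‖ := by ring
  -- conclusion
  intro ξ
  have hTj : ∀ j, HasSum (fun m : Zd d => f m • ((S j m - Sinf m) ξ)) ((T j - Tinf) ξ) := by
    intro j
    have h := ((hT j).sub hTinf).mapL (ContinuousLinearMap.apply ℂ (Hilb d) ξ)
    have h2 : (fun m : Zd d => f m • ((S j m - Sinf m) ξ))
        = fun m : Zd d => (ContinuousLinearMap.apply ℂ (Hilb d) ξ) (f m • S j m - f m • Sinf m) := by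
      funext m
      simp [ContinuousLinearMap.sub_apply, ContinuousLinearMap.smul_apply, smul_sub]
    rw [h2]
    exact h
  have hbound : ∀ j, ‖(T j - Tinf) ξ‖ ≤ ∑' m : Zd d, ‖f m‖ * ‖(S j m - Sinf m) ξ‖ := by
    intro j
    have hs : Summable (fun m : Zd d => ‖f m • ((S j m - Sinf m) ξ)‖) := by
      refine Summable.of_nonneg_of_le (fun _ => norm_nonneg _) ?_ (hfsum.mul_right (2 * ‖ξ‖))
      intro m
      rw [norm_smul]
      refine mul_le_mul_of_nonneg_left ?_ (norm_nonneg _)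
      rw [ContinuousLinearMap.sub_apply]
      calc ‖S j m ξ - Sinf m ξ‖ ≤ ‖S j m ξ‖ + ‖Sinf m ξ‖ := norm_sub_le _ _
        _ ≤ ‖ξ‖ + ‖ξ‖ := add_le_add (hSle j m ξ) (hSinfle m ξ)
        _ = 2 * ‖ξ‖ := by ring
    calc ‖(T j - Tinf) ξ‖ = ‖∑' m : Zd d, f m • ((S j m - Sinf m) ξ)‖ := by
          rw [(hTj j).tsum_eq]
      _ ≤ ∑' m : Zd d, ‖f m • ((S j m - Sinf m) ξ)‖ := norm_tsum_le_tsum_norm hs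
      _ = ∑' m : Zd d, ‖f m‖ * ‖(S j m - Sinf m) ξ‖ := by
          exact tsum_congr fun m => by rw [norm_smul]
  have hlim : Tendsto (fun j => ∑' m : Zd d, ‖f m‖ * ‖(S j m - Sinf m) ξ‖)
      atTop (nhds 0) := by
    have hterm : ∀ m : Zd d,
        Tendsto (fun j => ‖f m‖ * ‖(S j m - Sinf m) ξ‖) atTop (nhds 0) := by
      intro m
      have h := (hSstrong m ξ).const_mul (‖f m‖)
      simpa using h
    have hbnd : ∀ᶠ j in atTop, ∀ m : Zd d,
        ‖‖f m‖ * ‖(S j m - Sinf m) ξ‖‖ ≤ ‖f m‖ * (2 * ‖ξ‖) := by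
      refine Eventually.of_forall fun j => fun m => ?_
      rw [Real.norm_eq_abs, abs_of_nonneg (by positivity)]
      refine mul_le_mul_of_nonneg_left ?_ (norm_nonneg _)
      rw [ContinuousLinearMap.sub_apply]
      calc ‖S j m ξ - Sinf m ξ‖ ≤ ‖S j m ξ‖ + ‖Sinf m ξ‖ := norm_sub_le _ _
        _ ≤ ‖ξ‖ + ‖ξ‖ := add_le_add (hSle j m ξ) (hSinfle m ξ)
        _ = 2 * ‖ξ‖ := by ring
    have key := tendsto_tsum_of_dominated_convergence (𝓕 := atTop)
      (f := fun j (m : Zd d) => ‖f m‖ * ‖(S j m - Sinf m) ξ‖) (g := fun _ => 0)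
      (bound := fun m => ‖f m‖ * (2 * ‖ξ‖)) (hfsum.mul_right _) hterm hbnd
    simpa using key
  exact tendsto_of_tendsto_of_tendsto_of_le_of_le tendsto_const_nhds hlim
    (fun j => norm_nonneg _) hbound
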